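/- Klein's inequality: if f is a differentiable convex function on (0, ∞) and A, B are positive definite n×n Hermitian matrices, then Tr(f(A) - f(B)) ≥ Tr((A - B) f'(B)). -/

import Mathlib

open Matrix ComplexOrder

/-- Tangent line inequality for a convex differentiable function on `(0,∞)`. -/
lemma tangent_le {f f' : ℝ → ℝ}
    (hconv : ConvexOn ℝ (Set.Ioi (0 : ℝ)) f)
    (hderiv : ∀ x ∈ Set.Ioi (0 : ℝ), HasDerivAt f (f' x) x)
    {x y : ℝ} (hx : x ∈ Set.Ioi (0:ℝ)) (hy : y ∈ Set.Ioi (0:ℝ)) :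
    f y + f' y * (x - y) ≤ f x := by
  rcases lt_trichotomy x y with h | h | h
  · have := hconv.slope_le_of_hasDerivAt hx hy h (hderiv y hy)
    rw [slope_def_field] at this
    have hyx : 0 < y - x := by linarith
    rw [div_le_iff₀ hyx] at this
    nlinarith
  · subst h; simp
  · have := hconv.le_slope_of_hasDerivAt hy hx h (hderiv y hy)
    rw [slope_def_field] at this
    have hxy : 0 < x - y := by linarith
    rw [le_div_iff₀ hxy] at this
    nlinarith

lemma trace_single {n : Type*} [Fintype n] [DecidableEq n]
    (U : Matrix n n ℂ) (hU : star U * U = 1) (d : n → ℝ) :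
    (U * diagonal ((RCLike.ofReal : ℝ → ℂ) ∘ d) * star U).trace = ((∑ i, d i : ℝ) : ℂ) := by
  rw [Matrix.trace_mul_cycle, hU, one_mul, Matrix.trace_diagonal]
  push_cast
  rfl

lemma trace_triple {n : Type*} [Fintype n] [DecidableEq n]
    (U V : Matrix n n ℂ) (hU1 : star U * U = 1) (hU2 : U * star U = 1) (d e : n → ℝ) :
    ((U * diagonal ((RCLike.ofReal : ℝ → ℂ) ∘ d) * star U) *
      (V * diagonal ((RCLike.ofReal : ℝ → ℂ) ∘ e) * star V)).trace
      = ((∑ i, ∑ j, Complex.normSq ((star U * V) i j) * (d i * e j) : ℝ) : ℂ) := by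
  have key : (U * diagonal ((RCLike.ofReal : ℝ → ℂ) ∘ d) * star U) *
      (V * diagonal ((RCLike.ofReal : ℝ → ℂ) ∘ e) * star V)
      = U * (diagonal ((RCLike.ofReal : ℝ → ℂ) ∘ d) * (star U * V) *
          diagonal ((RCLike.ofReal : ℝ → ℂ) ∘ e) * star (star U * V)) * star U := by
    simp only [StarMul.star_mul, star_star, Matrix.mul_assoc]
    rw [hU2, Matrix.mul_one]
  rw [key, Matrix.trace_mul_cycle, ← Matrix.mul_assoc, hU1, one_mul]
  generalize star U * V = Wm
  rw [Matrix.trace]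
  push_cast
  refine Finset.sum_congr rfl fun i _ => ?_
  rw [Matrix.diag_apply, Matrix.mul_apply]
  simp only [Matrix.mul_diagonal, Matrix.diagonal_mul, Matrix.star_apply, Function.comp_apply]
  refine Finset.sum_congr rfl fun j _ => ?_
  rw [← Complex.mul_conj]
  simp only [RCLike.star_def]
  have hco : (RCLike.ofReal : ℝ → ℂ) = Complex.ofReal := rfl
  simp only [hco]
  ring

lemma row_sum {n : Type*} [Fintype n] [DecidableEq n]
    (W : Matrix n n ℂ) (h : W * star W = 1) (i : n) :
    ∑ j, Complex.normSq (W i j) = 1 := by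
  have h' : (W * star W) i i = 1 := by rw [h]; simp [Matrix.one_apply]
  rw [Matrix.mul_apply] at h'
  simp only [Matrix.star_apply, RCLike.star_def, Complex.mul_conj] at h'
  exact_mod_cast h'

lemma col_sum {n : Type*} [Fintype n] [DecidableEq n]
    (W : Matrix n n ℂ) (h : star W * W = 1) (j : n) :
    ∑ i, Complex.normSq (W i j) = 1 := by
  have := row_sum (star W) (by rwa [star_star]) j
  simpa [Matrix.star_apply, RCLike.star_def, Complex.normSq_conj] using this

theorem stmt_3 {n : Type*} [Fintype n] [DecidableEq n] (f f' : ℝ → ℝ)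
    (hconv : ConvexOn ℝ (Set.Ioi (0 : ℝ)) f)
    (hderiv : ∀ x ∈ Set.Ioi (0 : ℝ), HasDerivAt f (f' x) x)
    (A B : Matrix n n ℂ) (hA : A.PosDef) (hB : B.PosDef) :
    Matrix.trace ((A - B) * cfc f' B) ≤ Matrix.trace (cfc f A - cfc f B) := by
  have hAh : A.IsHermitian := hA.1
  have hBh : B.IsHermitian := hB.1
  have hU1 : star (hAh.eigenvectorUnitary : Matrix n n ℂ) * (hAh.eigenvectorUnitary : Matrix n n ℂ)
      = 1 := Unitary.star_mul_self_of_mem (SetLike.coe_mem _)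
  have hU2 : (hAh.eigenvectorUnitary : Matrix n n ℂ) * star (hAh.eigenvectorUnitary : Matrix n n ℂ)
      = 1 := Unitary.mul_star_self_of_mem (SetLike.coe_mem _)
  have hV1 : star (hBh.eigenvectorUnitary : Matrix n n ℂ) * (hBh.eigenvectorUnitary : Matrix n n ℂ)
      = 1 := Unitary.star_mul_self_of_mem (SetLike.coe_mem _)
  have hV2 : (hBh.eigenvectorUnitary : Matrix n n ℂ) * star (hBh.eigenvectorUnitary : Matrix n n ℂ)
      = 1 := Unitary.mul_star_self_of_mem (SetLike.coe_mem _)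
  -- abbreviations
  set a : n → ℝ := hAh.eigenvalues with ha
  set b : n → ℝ := hBh.eigenvalues with hb
  set W : Matrix n n ℂ :=
    star (hAh.eigenvectorUnitary : Matrix n n ℂ) * (hBh.eigenvectorUnitary : Matrix n n ℂ)
    with hWdef
  have hW2 : W * star W = 1 := by
    have h : W * star W = star (hAh.eigenvectorUnitary : Matrix n n ℂ) *
        ((hBh.eigenvectorUnitary : Matrix n n ℂ) * star (hBh.eigenvectorUnitary : Matrix n n ℂ) *
          (hAh.eigenvectorUnitary : Matrix n n ℂ)) := by
      simp only [hWdef, StarMul.star_mul, star_star, Matrix.mul_assoc]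
    rw [h, hV2, one_mul, hU1]
  have hW1 : star W * W = 1 := by
    have h : star W * W = star (hBh.eigenvectorUnitary : Matrix n n ℂ) *
        ((hAh.eigenvectorUnitary : Matrix n n ℂ) * star (hAh.eigenvectorUnitary : Matrix n n ℂ) *
          (hBh.eigenvectorUnitary : Matrix n n ℂ)) := by
      simp only [hWdef, StarMul.star_mul, star_star, Matrix.mul_assoc]
    rw [h, hU2, one_mul, hV1]
  set c : n → n → ℝ := fun i j => Complex.normSq (W i j) with hc
  have hcnn : ∀ i j, 0 ≤ c i j := fun i j => Complex.normSq_nonneg _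
  have hrow : ∀ i, ∑ j, c i j = 1 := fun i => row_sum W hW2 i
  have hcol : ∀ j, ∑ i, c i j = 1 := fun j => col_sum W hW1 j
  have hapos : ∀ i, a i ∈ Set.Ioi (0:ℝ) := fun i => hA.eigenvalues_pos i
  have hbpos : ∀ j, b j ∈ Set.Ioi (0:ℝ) := fun j => hB.eigenvalues_pos j
  -- trace identities
  have E1 : Matrix.trace (cfc f A) = ((∑ i, f (a i) : ℝ) : ℂ) := by
    rw [hAh.cfc_eq]
    simp only [Matrix.IsHermitian.cfc]
    exact trace_single _ hU1 (f ∘ hAh.eigenvalues)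
  have E2 : Matrix.trace (cfc f B) = ((∑ j, f (b j) : ℝ) : ℂ) := by
    rw [hBh.cfc_eq]
    simp only [Matrix.IsHermitian.cfc]
    exact trace_single _ hV1 (f ∘ hBh.eigenvalues)
  have E3 : Matrix.trace (A * cfc f' B)
      = ((∑ i, ∑ j, c i j * (a i * f' (b j)) : ℝ) : ℂ) := by
    rw [hBh.cfc_eq]
    simp only [Matrix.IsHermitian.cfc]
    conv_lhs => rw [hAh.spectral_theorem]
    exact trace_triple _ _ hU1 hU2 hAh.eigenvalues (f' ∘ hBh.eigenvalues)
  have E4 : Matrix.trace (B * cfc f' B) = ((∑ j, b j * f' (b j) : ℝ) : ℂ) := by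
    have hc1 : ContinuousOn (fun x : ℝ => x) (spectrum ℝ B) := by fun_prop
    have hc2 : ContinuousOn f' (spectrum ℝ B) :=
      (Matrix.finite_real_spectrum (A := B)).continuousOn f'
    have h1 : cfc (fun x : ℝ => x * f' x) B = B * cfc f' B := by
      rw [cfc_mul (fun x : ℝ => x) f' B hc1 hc2, cfc_id' ℝ B]
    rw [← h1, hBh.cfc_eq]
    simp only [Matrix.IsHermitian.cfc]
    refine (trace_single _ hV1 ((fun x : ℝ => x * f' x) ∘ hBh.eigenvalues)).trans ?_
    norm_num [Function.comp]
    rfl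
  -- reduce to a real inequality
  rw [Matrix.sub_mul, Matrix.trace_sub, Matrix.trace_sub, E1, E2, E3, E4,
    ← Complex.ofReal_sub, ← Complex.ofReal_sub, Complex.real_le_real]
  -- convexity argument
  have S1 : ∑ i, ∑ j, c i j * f (a i) = ∑ i, f (a i) := by
    refine Finset.sum_congr rfl fun i _ => ?_
    rw [← Finset.sum_mul, hrow, one_mul]
  have S2 : ∑ i, ∑ j, c i j * f (b j) = ∑ j, f (b j) := by
    rw [Finset.sum_comm]
    refine Finset.sum_congr rfl fun j _ => ?_
    rw [← Finset.sum_mul, hcol, one_mul]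
  have S3 : ∑ i, ∑ j, c i j * (b j * f' (b j)) = ∑ j, b j * f' (b j) := by
    rw [Finset.sum_comm]
    refine Finset.sum_congr rfl fun j _ => ?_
    rw [← Finset.sum_mul, hcol, one_mul]
  have main : ∑ i, ∑ j, c i j * (f (b j) + f' (b j) * (a i - b j))
      ≤ ∑ i, ∑ j, c i j * f (a i) := by
    refine Finset.sum_le_sum fun i _ => Finset.sum_le_sum fun j _ => ?_
    exact mul_le_mul_of_nonneg_left
      (tangent_le hconv hderiv (hapos i) (hbpos j)) (hcnn i j)
  have expand : ∑ i, ∑ j, c i j * (f (b j) + f' (b j) * (a i - b j))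
      = (∑ i, ∑ j, c i j * f (b j)) + (∑ i, ∑ j, c i j * (a i * f' (b j)))
        - ∑ i, ∑ j, c i j * (b j * f' (b j)) := by
    rw [← Finset.sum_add_distrib, ← Finset.sum_sub_distrib]
    refine Finset.sum_congr rfl fun i _ => ?_
    rw [← Finset.sum_add_distrib, ← Finset.sum_sub_distrib]
    exact Finset.sum_congr rfl fun j _ => by ring
  rw [expand, S1, S2, S3] at main
  linarith
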